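/- In Aut(W_n), two partial conjugations x_{i,D_i} and x_{j,D_j} with distinct acting letters i ≠ j commute if any of the following disjointness conditions holds, where D̃ = D ∪ {acting letter}: (D_i ∪ {i}) ∩ (D_j ∪ {j}) = ∅, or (D_i^c ∪ {i}) ∩ (D_j ∪ {j}) = ∅, or (D_i ∪ {i}) ∩ (D_j^c ∪ {j}) = ∅, where D^c = [n] ∖ (D ∪ {acting letter}). -/

import Mathlib

/-- Defining relations of `Wₙ`: each generator squares to the identity. -/
def wrels (n : ℕ) : Set (FreeGroup (Fin n)) :=
  {r | ∃ i : Fin n, r = FreeGroup.of i * FreeGroup.of i}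

/-- The universal right-angled Coxeter group `Wₙ`. -/
abbrev W (n : ℕ) := PresentedGroup (wrels n)

/-- The generator `aᵢ` of `Wₙ`. -/
def gen {n : ℕ} (i : Fin n) : W n := PresentedGroup.of i

/-- `φ` is the partial conjugation with acting letter `aᵢ` and domain `D`. -/
def IsPC {n : ℕ} (φ : W n ≃* W n) (i : Fin n) (D : Finset (Fin n)) : Prop :=
  (∀ j ∈ D, φ (gen j) = gen i * gen j * gen i) ∧ (∀ j ∉ D, φ (gen j) = gen j)

lemma gen_sq {n : ℕ} (i : Fin n) : gen i * gen i = 1 := by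
  have h : (FreeGroup.of i * FreeGroup.of i) ∈ Subgroup.normalClosure (wrels n) :=
    Subgroup.subset_normalClosure ⟨i, rfl⟩
  have : ((QuotientGroup.mk (FreeGroup.of i * FreeGroup.of i) : W n)) = 1 :=
    (QuotientGroup.eq_one_iff _).mpr h
  exact this

lemma gen_cancel {n : ℕ} (i : Fin n) (x : W n) : gen i * (gen i * x) = x := by
  rw [← mul_assoc, gen_sq, one_mul]

/-- Commuting criterion (Gutierrez–Piggott–Ruane): two partial conjugations
`x_{i,Dᵢ}` and `x_{j,Dⱼ}` with distinct acting letters commute whenever one of the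
disjointness conditions `D̃ᵢ ∩ D̃ⱼ = ∅`, `D̃ᵢᶜ ∩ D̃ⱼ = ∅`, or `D̃ᵢ ∩ D̃ⱼᶜ = ∅` holds,
where `D̃ = D ∪ {acting letter}` and `Dᶜ = [n] ∖ (D ∪ {acting letter})`. -/
theorem stmt5 (n : ℕ) (i j : Fin n) (Di Dj : Finset (Fin n)) (hij : i ≠ j)
    (hi : i ∉ Di) (hj : j ∉ Dj)
    (φ ψ : W n ≃* W n) (hφ : IsPC φ i Di) (hψ : IsPC ψ j Dj)
    (hdisj :
      insert i Di ∩ insert j Dj = ∅ ∨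
      insert i ((insert i Di)ᶜ) ∩ insert j Dj = ∅ ∨
      insert i Di ∩ insert j ((insert j Dj)ᶜ) = ∅) :
    ∀ w : W n, φ (ψ w) = ψ (φ w) := by
  obtain ⟨hφ1, hφ2⟩ := hφ
  obtain ⟨hψ1, hψ2⟩ := hψ
  have hφi : φ (gen i) = gen i := hφ2 i hi
  have hψj : ψ (gen j) = gen j := hψ2 j hj
  have key : ∀ k : Fin n, φ (ψ (gen k)) = ψ (φ (gen k)) := by
    intro k
    rcases hdisj with h | h | h
    · -- D̃ᵢ ∩ D̃ⱼ = ∅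
      have H : ∀ x : Fin n, (x = i ∨ x ∈ Di) → ¬(x = j ∨ x ∈ Dj) := by
        intro x hx
        have := Finset.eq_empty_iff_forall_notMem.mp h x
        simp only [Finset.mem_inter, Finset.mem_insert, not_and] at this
        exact this hx
      have hiDj : i ∉ Dj := fun hc => H i (Or.inl rfl) (Or.inr hc)
      have hjDi : j ∉ Di := fun hc => H j (Or.inr hc) (Or.inl rfl)
      have hψi : ψ (gen i) = gen i := hψ2 i hiDj
      have hφj : φ (gen j) = gen j := hφ2 j hjDi
      by_cases hkDi : k ∈ Di
      · have hkDj : k ∉ Dj := fun hc => H k (Or.inr hkDi) (Or.inr hc)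
        simp only [hψ2 k hkDj, hφ1 k hkDi, map_mul, hψi]
      · by_cases hkDj : k ∈ Dj
        · simp only [hψ1 k hkDj, hφ2 k hkDi, map_mul, hφj]
        · simp only [hψ2 k hkDj, hφ2 k hkDi]
    · -- D̃ᵢᶜ ∩ D̃ⱼ = ∅, i.e. D̃ⱼ ⊆ Di
      have H : ∀ x : Fin n, (x = j ∨ x ∈ Dj) → x ∈ Di := by
        intro x hx
        have := Finset.eq_empty_iff_forall_notMem.mp h x
        simp only [Finset.mem_inter, Finset.mem_insert, Finset.mem_compl, not_and,
          not_or] at this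
        by_contra hc
        by_cases hxi : x = i
        · exact (this (Or.inl hxi)).elim (fun h1 h2 => hx.elim h1 h2)
        · exact (this (Or.inr (by simp [hxi, hc]))).elim (fun h1 h2 => hx.elim h1 h2)
      have hiDj : i ∉ Dj := by
        intro hc
        have := Finset.eq_empty_iff_forall_notMem.mp h i
        simp only [Finset.mem_inter, Finset.mem_insert, not_and, not_or] at this
        tauto
      have hψi : ψ (gen i) = gen i := hψ2 i hiDj
      by_cases hkDj : k ∈ Dj
      · have hkDi : k ∈ Di := H k (Or.inr hkDj)
        have hjDi : j ∈ Di := H j (Or.inl rfl)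
        simp only [hψ1 k hkDj, map_mul, hφ1 j hjDi, hφ1 k hkDi, hψi]
        simp [mul_assoc, gen_cancel]
      · by_cases hkDi : k ∈ Di
        · simp only [hψ2 k hkDj, hφ1 k hkDi, map_mul, hψi]
        · simp only [hψ2 k hkDj, hφ2 k hkDi]
    · -- D̃ᵢ ∩ D̃ⱼᶜ = ∅, i.e. D̃ᵢ ⊆ Dj
      have H : ∀ x : Fin n, (x = i ∨ x ∈ Di) → x ∈ Dj := by
        intro x hx
        have := Finset.eq_empty_iff_forall_notMem.mp h x
        simp only [Finset.mem_inter, Finset.mem_insert, Finset.mem_compl, not_and,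
          not_or] at this
        by_contra hc
        by_cases hxj : x = j
        · exact (this hx).1 hxj
        · exact absurd (Or.inr (And.intro hxj hc) : x = j ∨ (¬x = j ∧ x ∉ Dj))
            (by tauto)
      have hjDi : j ∉ Di := by
        intro hc
        have := Finset.eq_empty_iff_forall_notMem.mp h j
        simp only [Finset.mem_inter, Finset.mem_insert, not_and, not_or] at this
        tauto
      have hφj : φ (gen j) = gen j := hφ2 j hjDi
      by_cases hkDi : k ∈ Di
      · have hkDj : k ∈ Dj := H k (Or.inr hkDi)
        have hiDj : i ∈ Dj := H i (Or.inl rfl)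
        simp only [hφ1 k hkDi, map_mul, hψ1 i hiDj, hψ1 k hkDj, hφi, hφj]
        simp [mul_assoc, gen_cancel]
      · by_cases hkDj : k ∈ Dj
        · simp only [hψ1 k hkDj, hφ2 k hkDi, map_mul, hφj]
        · simp only [hψ2 k hkDj, hφ2 k hkDi]
  intro w
  have hw : w ∈ Subgroup.closure (Set.range (PresentedGroup.of : Fin n → W n)) := by
    rw [PresentedGroup.closure_range_of]; trivial
  induction hw using Subgroup.closure_induction with
  | mem x hx => obtain ⟨k, rfl⟩ := hx; exact key k
  | one => simp
  | mul x y _ _ hx hy => simp only [map_mul, hx, hy]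
  | inv x _ hx => simp only [map_inv, hx]
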